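/- Let E be an edge constraint, Γ a set of configurations such that every member of Γ satisfies the universal quantifier w.r.t. E and every singleton configuration satisfying the universal quantifier w.r.t. E is dominated by some member of Γ, and S a set of configurations, each satisfying the universal quantifier w.r.t. E, such that every member of Γ is dominated by some member of S. Call a configuration missing if it satisfies the universal quantifier w.r.t. E and is not dominated by any member of S. If there exists a missing configuration all of whose sets are nonempty, then there exist configurations A, B ∈ S such that some combination of A and B is missing. (Some missing configuration can be obtained by combining two already computed configurations.) -/
import Mathlib

namespace RoundElim

/-- The configuration (multiset of cardinality `δ`) associated to a function `Fin δ → α`. -/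
def ofFn {α : Type*} {δ : ℕ} (f : Fin δ → α) : Multiset α :=
  (List.ofFn f : List α)

variable {σ : Type*} [DecidableEq σ]

/-- `DominatedBy A B` means: configuration `B` dominates configuration `A`. -/
def DominatedBy (A B : Multiset (Finset σ)) : Prop :=
  Multiset.Rel (· ⊆ ·) A B

/-- `StrictlyDominatedBy A B` means: configuration `B` strictly dominates configuration `A`. -/
def StrictlyDominatedBy (A B : Multiset (Finset σ)) : Prop :=
  DominatedBy A B ∧ ¬ DominatedBy B A

/-- The combination of the representatives `a`, `b` with respect to the permutation `φ`
and the index `u`: union at position `u`, intersection everywhere else. -/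
def combineFn {δ : ℕ} (a b : Fin δ → Finset σ) (φ : Equiv.Perm (Fin δ)) (u : Fin δ) :
    Fin δ → Finset σ :=
  fun i => if i = u then a i ∪ b (φ i) else a i ∩ b (φ i)

/-- `C` is a combination of the configurations `A` and `B`. -/
def IsCombination (δ : ℕ) (C A B : Multiset (Finset σ)) : Prop :=
  ∃ (a b : Fin δ → Finset σ) (φ : Equiv.Perm (Fin δ)) (u : Fin δ),
    ofFn a = A ∧ ofFn b = B ∧ ofFn (combineFn a b φ u) = C

/-- `C` satisfies the universal quantifier w.r.t. the edge constraint `E`. -/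
def SatUQ (E : Set (Multiset σ)) (C : Multiset (Finset σ)) : Prop :=
  ∀ M : Multiset σ, Multiset.Rel (· ∈ ·) M C → M ∈ E

/-- A singleton configuration: all its sets have exactly one element. -/
def IsSingletonConfig (C : Multiset (Finset σ)) : Prop :=
  ∀ s ∈ C, s.card = 1

/-- The combination-closure of a set `Γ` of configurations: the smallest set containing `Γ`
and containing every combination of two of its members. -/
inductive CombClosure (δ : ℕ) (Γ : Set (Multiset (Finset σ))) :
    Multiset (Finset σ) → Prop
  | base {C : Multiset (Finset σ)} : C ∈ Γ → CombClosure δ Γ C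
  | comb {A B C : Multiset (Finset σ)} : CombClosure δ Γ A → CombClosure δ Γ B →
      IsCombination δ C A B → CombClosure δ Γ C


section Aux
variable {α β : Type*} {δ : ℕ}

lemma card_ofFn (f : Fin δ → α) : Multiset.card (ofFn f) = δ := by
  simp [ofFn]

lemma rel_coe_exists {r : α → β → Prop} :
    ∀ (l : List α) (M : Multiset β), Multiset.Rel r ↑l M →
      ∃ l' : List β, M = ↑l' ∧ List.Forall₂ r l l' := by
  intro l
  induction l with
  | nil =>
    intro M h
    rw [Multiset.coe_nil, Multiset.rel_zero_left] at h
    exact ⟨[], by simp [h], List.Forall₂.nil⟩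
  | cons a l ih =>
    intro M h
    rw [← Multiset.cons_coe, Multiset.rel_cons_left] at h
    obtain ⟨b, M', hab, hrel, rfl⟩ := h
    obtain ⟨l', rfl, hF⟩ := ih M' hrel
    exact ⟨b :: l', by rw [Multiset.cons_coe], List.Forall₂.cons hab hF⟩

lemma rel_ofFn {r : α → β → Prop} {f : Fin δ → α} {M : Multiset β}
    (h : Multiset.Rel r (ofFn f) M) :
    ∃ g : Fin δ → β, ofFn g = M ∧ ∀ i, r (f i) (g i) := by
  obtain ⟨l', rfl, hF⟩ := rel_coe_exists (List.ofFn f) M h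
  have hlen : l'.length = δ := by
    have := hF.length_eq; simpa using this.symm
  subst hlen
  refine ⟨l'.get, by simp [ofFn, List.ofFn_get], fun i => ?_⟩
  rw [List.forall₂_iff_get] at hF
  have := hF.2 i (by simp) i.isLt
  simpa [List.get_ofFn] using this

lemma exists_fn_of_card {M : Multiset α} (h : Multiset.card M = δ) :
    ∃ f : Fin δ → α, ofFn f = M := by
  have hM : (M.toList : Multiset α) = M := Multiset.coe_toList M
  have hlen : M.toList.length = δ := by
    rw [← h, ← hM]; simp
  subst hlen
  exact ⟨M.toList.get, by rw [ofFn, List.ofFn_get, hM]⟩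

lemma rel_ofFn_of_forall {r : α → β → Prop} {f : Fin δ → α} {g : Fin δ → β}
    (h : ∀ i, r (f i) (g i)) : Multiset.Rel r (ofFn f) (ofFn g) := by
  induction δ with
  | zero => simp [ofFn, Multiset.rel_zero_left]
  | succ n ih =>
    have : Multiset.Rel r (ofFn (fun i : Fin n => f i.succ)) (ofFn (fun i : Fin n => g i.succ)) :=
      ih (fun i => h i.succ)
    simpa [ofFn, List.ofFn_succ, Multiset.cons_coe] using
      Multiset.Rel.cons (h 0) this

lemma ofFn_comp_perm (g : Fin δ → α) (π : Equiv.Perm (Fin δ)) :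
    ofFn (g ∘ π) = ofFn g := by
  have h1 : ∀ (h : Fin δ → α), ofFn h = Multiset.map h (Finset.univ.val : Multiset (Fin δ)) := by
    intro h
    rw [Fin.univ_def]
    show _ = Multiset.map h ↑(List.finRange δ)
    rw [Multiset.map_coe, ← List.ofFn_id, List.map_ofFn, Function.comp_id]
    rfl
  rw [h1, h1 g]
  have : Multiset.map (⇑π) (Finset.univ.val : Multiset (Fin δ)) = Finset.univ.val := by
    have := Finset.map_univ_equiv π
    rw [← this]; simp [Finset.map]
  rw [show (g ∘ ⇑π : Fin δ → α) = g ∘ ⇑π from rfl, ← Multiset.map_map, this]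

end Aux

section Domain
variable {δ : ℕ} {E : Set (Multiset σ)}

/-- Extract, from `Rel (· ∈ ·) N (ofFn c)`, a function giving the choices. -/
lemma choice_of_rel {N : Multiset σ} {c : Fin δ → Finset σ}
    (h : Multiset.Rel (· ∈ ·) N (ofFn c)) :
    ∃ g : Fin δ → σ, ofFn g = N ∧ ∀ i, g i ∈ c i := by
  have h' : Multiset.Rel (fun (s : Finset σ) (x : σ) => x ∈ s) (ofFn c) N :=
    Multiset.rel_flip.mpr h
  exact rel_ofFn h'

lemma rel_mem_of_forall {g : Fin δ → σ} {c : Fin δ → Finset σ}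
    (h : ∀ i, g i ∈ c i) : Multiset.Rel (· ∈ ·) (ofFn g) (ofFn c) := by
  have : Multiset.Rel (fun (s : Finset σ) (x : σ) => x ∈ s) (ofFn c) (ofFn g) :=
    rel_ofFn_of_forall h
  exact Multiset.rel_flip.mp this

/-- A combination of two configurations satisfying the UQ satisfies the UQ. -/
lemma satUQ_combineFn {a b : Fin δ → Finset σ}
    (ha : SatUQ E (ofFn a)) (hb : SatUQ E (ofFn b))
    (φ : Equiv.Perm (Fin δ)) (u : Fin δ) :
    SatUQ E (ofFn (combineFn a b φ u)) := by
  intro N hN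
  obtain ⟨g, rfl, hg⟩ := choice_of_rel hN
  by_cases hu : g u ∈ a u
  · apply ha
    apply rel_mem_of_forall
    intro i
    by_cases hi : i = u
    · subst hi; exact hu
    · have := hg i; simp only [combineFn, if_neg hi] at this
      exact (Finset.mem_inter.mp this).1
  · apply hb
    have hgu : g u ∈ b (φ u) := by
      have := hg u; simp only [combineFn, if_pos rfl] at this
      rcases Finset.mem_union.mp this with h | h
      · exact absurd h hu
      · exact h
    have hgb : ∀ i, (g ∘ φ.symm) i ∈ b i := by
      intro i
      by_cases hi : φ.symm i = u
      · have : i = φ u := by rw [← hi, Equiv.apply_symm_apply]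
        simpa [Function.comp, hi, this] using hgu
      · have := hg (φ.symm i)
        simp only [combineFn, if_neg hi] at this
        have := (Finset.mem_inter.mp this).2
        simpa [Function.comp] using this
    have : Multiset.Rel (· ∈ ·) (ofFn (g ∘ φ.symm)) (ofFn b) := rel_mem_of_forall hgb
    rwa [ofFn_comp_perm] at this

lemma dominatedBy_ofFn {f g : Fin δ → Finset σ} (h : ∀ i, f i ⊆ g i) :
    DominatedBy (ofFn f) (ofFn g) :=
  rel_ofFn_of_forall h

lemma dominatedBy_trans {A B C : Multiset (Finset σ)}
    (h1 : DominatedBy A B) (h2 : DominatedBy B C) : DominatedBy A C :=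
  Multiset.Rel.trans _ h1 h2

end Domain



/-- If at least one configuration (with nonempty sets) is missing, then some missing
configuration can be obtained by combining two already computed configurations.
(Missing = satisfies the universal quantifier w.r.t. `E` and is not dominated by any member
of the set `S` of computed configurations.) -/
theorem missing_from_two_computed {σ : Type*} [Fintype σ] [DecidableEq σ] (δ : ℕ) (hδ : 0 < δ)
    (E : Set (Multiset σ)) (Γ S : Set (Multiset (Finset σ)))
    (hΓuq : ∀ A ∈ Γ, SatUQ E A)
    (hΓsing : ∀ M : Multiset (Finset σ), Multiset.card M = δ → IsSingletonConfig M →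
      SatUQ E M → ∃ A ∈ Γ, DominatedBy M A)
    (hSuq : ∀ T ∈ S, SatUQ E T)
    (hΓS : ∀ A ∈ Γ, ∃ T ∈ S, DominatedBy A T)
    (hex : ∃ M : Multiset (Finset σ), Multiset.card M = δ ∧ (∀ s ∈ M, s.Nonempty) ∧
      SatUQ E M ∧ ¬ ∃ T ∈ S, DominatedBy M T) :
    ∃ A ∈ S, ∃ B ∈ S, ∃ C : Multiset (Finset σ), IsCombination δ C A B ∧
      SatUQ E C ∧ ¬ ∃ T ∈ S, DominatedBy C T := by
  classical
  by_contra hcon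
  push_neg at hcon
  -- hcon : ∀ A ∈ S, ∀ B ∈ S, ∀ C, IsCombination δ C A B → SatUQ E C → ∃ T ∈ S, DominatedBy C T
  obtain ⟨M, hMcard, hMne, hMuq, hMnd⟩ := hex
  obtain ⟨m, rfl⟩ := exists_fn_of_card hMcard
  have hne : ∀ i, (m i).Nonempty := fun i => hMne (m i) (by
    simp only [ofFn, Multiset.mem_coe, List.mem_ofFn]
    exact ⟨i, rfl⟩)
  -- "Good" functions: satisfy UQ and are dominated by a member of S
  set Good : (Fin δ → Finset σ) → Prop :=
    fun t => SatUQ E (ofFn t) ∧ ∃ T ∈ S, DominatedBy (ofFn t) T with hGood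
  -- any Good t can be replaced by a rep of an element of S pointwise containing it
  have good_rep : ∀ t : Fin δ → Finset σ, Good t →
      ∃ τ : Fin δ → Finset σ, (ofFn τ ∈ S) ∧ ∀ i, t i ⊆ τ i := by
    intro t ⟨_, T, hTS, hdom⟩
    obtain ⟨τ, hτ, hsub⟩ := rel_ofFn hdom
    exact ⟨τ, hτ ▸ hTS, hsub⟩
  -- combining two Good functions gives a Good function
  have good_comb : ∀ t t' : Fin δ → Finset σ, Good t → Good t' → ∀ u : Fin δ,
      Good (combineFn t t' 1 u) := by
    intro t t' ht ht' u
    constructor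
    · exact satUQ_combineFn ht.1 ht'.1 1 u
    · obtain ⟨τ, hτS, hτ⟩ := good_rep t ht
      obtain ⟨τ', hτ'S, hτ'⟩ := good_rep t' ht'
      have hcombS : ∃ T ∈ S, DominatedBy (ofFn (combineFn τ τ' 1 u)) T := by
        apply hcon _ hτS _ hτ'S
        · exact ⟨τ, τ', 1, u, rfl, rfl, rfl⟩
        · exact satUQ_combineFn (hSuq _ hτS) (hSuq _ hτ'S) 1 u
      obtain ⟨T, hTS, hTdom⟩ := hcombS
      refine ⟨T, hTS, dominatedBy_trans (dominatedBy_ofFn ?_) hTdom⟩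
      intro i
      simp only [combineFn, Equiv.Perm.one_apply]
      by_cases hi : i = u
      · simp only [if_pos hi]
        exact Finset.union_subset_union (hτ i) (hτ' i)
      · simp only [if_neg hi]
        exact Finset.inter_subset_inter (hτ i) (hτ' i)
  -- base: singleton choices give Good functions
  have good_single : ∀ x : Fin δ → σ, (∀ i, x i ∈ m i) →
      ∃ t : Fin δ → Finset σ, Good t ∧ ∀ i, x i ∈ t i := by
    intro x hx
    have hsuq : SatUQ E (ofFn (fun i => ({x i} : Finset σ))) := by
      intro N hN
      obtain ⟨g, rfl, hg⟩ := choice_of_rel hN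
      apply hMuq
      apply rel_mem_of_forall
      intro i
      have : g i = x i := by simpa using hg i
      rw [this]; exact hx i
    obtain ⟨A, hAΓ, hAdom⟩ := hΓsing (ofFn (fun i => ({x i} : Finset σ)))
      (card_ofFn _) (by
        intro s hs
        rw [ofFn, Multiset.mem_coe, List.mem_ofFn] at hs
        obtain ⟨i, rfl⟩ := hs
        simp) hsuq
    obtain ⟨T, hTS, hTdom⟩ := hΓS A hAΓ
    have hdom : DominatedBy (ofFn (fun i => ({x i} : Finset σ))) T :=
      dominatedBy_trans hAdom hTdom
    obtain ⟨t, rfl, ht⟩ := rel_ofFn hdom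
    refine ⟨t, ⟨hSuq _ hTS, _, hTS, dominatedBy_ofFn (fun i => subset_rfl)⟩,
      fun i => ht i (by simp)⟩
  -- main induction over processed index sets
  have main : ∀ P : Finset (Fin δ), ∀ x : Fin δ → σ, (∀ i ∉ P, x i ∈ m i) →
      ∃ t : Fin δ → Finset σ, Good t ∧ (∀ i ∈ P, m i ⊆ t i) ∧ (∀ i ∉ P, x i ∈ t i) := by
    intro P
    induction P using Finset.induction with
    | empty =>
      intro x hx
      obtain ⟨t, ht, hxt⟩ := good_single x (fun i => hx i (by simp))
      exact ⟨t, ht, by simp, fun i _ => hxt i⟩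
    | @insert u P hu ih =>
      intro x hx
      -- subinduction: grow a subset B of m u inside t u
      have sub : ∀ B : Finset σ, B ⊆ m u → ∃ t : Fin δ → Finset σ, Good t ∧
          (∀ i ∈ P, m i ⊆ t i) ∧ (∀ i ∉ insert u P, x i ∈ t i) ∧ B ⊆ t u := by
        intro B
        induction B using Finset.induction with
        | empty =>
          intro _
          set x' : Fin δ → σ := Function.update x u (hne u).choose with hx'
          have hx'm : ∀ i ∉ P, x' i ∈ m i := by
            intro i hiP
            by_cases hiu : i = u
            · subst hiu
              simp only [hx', Function.update_self]
              exact (hne i).choose_spec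
            · rw [hx', Function.update_of_ne hiu]
              exact hx i (by simp [hiu, hiP])
          obtain ⟨t, ht, htP, htx⟩ := ih x' hx'm
          refine ⟨t, ht, htP, fun i hi => ?_, by simp⟩
          have hiu : i ≠ u := fun h => hi (h ▸ Finset.mem_insert_self u P)
          have hiP : i ∉ P := fun h => hi (Finset.mem_insert_of_mem h)
          have := htx i hiP
          rwa [hx', Function.update_of_ne hiu] at this
        | @insert y B hy ihB =>
          intro hBm
          have hym : y ∈ m u := hBm (Finset.mem_insert_self y B)
          have hBm' : B ⊆ m u := fun z hz => hBm (Finset.mem_insert_of_mem hz)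
          obtain ⟨t, ht, htP, htx, htB⟩ := ihB hBm'
          set x'' : Fin δ → σ := Function.update x u y with hx''
          have hx''m : ∀ i ∉ P, x'' i ∈ m i := by
            intro i hiP
            by_cases hiu : i = u
            · subst hiu; simp only [hx'', Function.update_self]; exact hym
            · rw [hx'', Function.update_of_ne hiu]
              exact hx i (by simp [hiu, hiP])
          obtain ⟨t', ht', ht'P, ht'x⟩ := ih x'' hx''m
          refine ⟨combineFn t t' 1 u, good_comb t t' ht ht' u, ?_, ?_, ?_⟩
          · intro i hiP
            have hiu : i ≠ u := fun h => hu (h ▸ hiP)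
            simp only [combineFn, Equiv.Perm.one_apply, if_neg hiu]
            exact Finset.subset_inter (htP i hiP) (ht'P i hiP)
          · intro i hi
            have hiu : i ≠ u := fun h => hi (h ▸ Finset.mem_insert_self u P)
            have hiP : i ∉ P := fun h => hi (Finset.mem_insert_of_mem h)
            simp only [combineFn, Equiv.Perm.one_apply, if_neg hiu]
            refine Finset.mem_inter.mpr ⟨htx i hi, ?_⟩
            have := ht'x i hiP
            rwa [hx'', Function.update_of_ne hiu] at this
          · simp only [combineFn, Equiv.Perm.one_apply, if_pos rfl]
            intro z hz
            rcases Finset.mem_insert.mp hz with rfl | hzB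
            · apply Finset.mem_union_right
              have := ht'x u hu
              rwa [hx'', Function.update_self] at this
            · exact Finset.mem_union_left _ (htB hzB)
      obtain ⟨t, ht, htP, htx, htm⟩ := sub (m u) subset_rfl
      refine ⟨t, ht, ?_, fun i hi => htx i hi⟩
      intro i hi
      rcases Finset.mem_insert.mp hi with rfl | hiP
      · exact htm
      · exact htP i hiP
  -- conclude: M itself is dominated by a member of S, contradiction
  obtain ⟨t, ht, htP, -⟩ := main Finset.univ (fun i => (hne i).choose)
    (fun i hi => absurd (Finset.mem_univ i) hi)
  obtain ⟨T, hTS, hTdom⟩ := ht.2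
  exact hMnd ⟨T, hTS, dominatedBy_trans (dominatedBy_ofFn (fun i => htP i (Finset.mem_univ i))) hTdom⟩

end RoundElim
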